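/- For every triple Φ₀, Ψ, Φ of unit vectors in a complex inner product space E, one has | |⟨Φ, Ψ⟩|² − |⟨Φ₀, Φ⟩|² | ≤ arccos|⟨Φ₀, Ψ⟩|. -/

import Mathlib

open scoped InnerProductSpace
open Real

lemma arccos_antitone : Antitone Real.arccos := fun _ _ h => by
  unfold Real.arccos; exact sub_le_sub_left (Real.monotone_arcsin h) _

/-- Triangle inequality for the Bures angle. -/
lemma bures_triangle {E : Type*} [NormedAddCommGroup E] [InnerProductSpace ℂ E]
    (x y z : E) (hx : ‖x‖ = 1) (hy : ‖y‖ = 1) (hz : ‖z‖ = 1) :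
    Real.arccos (‖⟪y, z⟫_ℂ‖)
      ≤ Real.arccos (‖⟪x, y⟫_ℂ‖) + Real.arccos (‖⟪x, z⟫_ℂ‖) := by
  set b := ‖⟪x, y⟫_ℂ‖ with hbdef
  set c := ‖⟪x, z⟫_ℂ‖ with hcdef
  have hb0 : 0 ≤ b := norm_nonneg _
  have hc0 : 0 ≤ c := norm_nonneg _
  have hb1 : b ≤ 1 := by
    have := norm_inner_le_norm (𝕜 := ℂ) x y; rwa [hx, hy, one_mul] at this
  have hc1 : c ≤ 1 := by
    have := norm_inner_le_norm (𝕜 := ℂ) x z; rwa [hx, hz, one_mul] at this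
  set u := y - ⟪x, y⟫_ℂ • x with hudef
  set v := z - ⟪x, z⟫_ℂ • x with hvdef
  have hxx : ⟪x, x⟫_ℂ = 1 := by
    rw [inner_self_eq_norm_sq_to_K, hx]; norm_num
  have hxu : ⟪x, u⟫_ℂ = 0 := by
    simp [hudef, inner_sub_right, inner_smul_right, hxx, hx]
  have hxv : ⟪x, v⟫_ℂ = 0 := by
    simp [hvdef, inner_sub_right, inner_smul_right, hxx, hx]
  -- norms of orthogonal parts
  have hyu : ‖u‖ ^ 2 = 1 - b ^ 2 := by
    have hdecomp : ⟪x, y⟫_ℂ • x + u = y := by simp [hudef]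
    have horth : ⟪⟪x, y⟫_ℂ • x, u⟫_ℂ = 0 := by
      rw [inner_smul_left, hxu, mul_zero]
    have := norm_add_sq_eq_norm_sq_add_norm_sq_of_inner_eq_zero _ _ horth
    rw [hdecomp, hy] at this
    have hns : ‖⟪x, y⟫_ℂ • x‖ = b := by rw [norm_smul, hx, mul_one]
    rw [hns] at this; nlinarith [this]
  have hzv : ‖v‖ ^ 2 = 1 - c ^ 2 := by
    have hdecomp : ⟪x, z⟫_ℂ • x + v = z := by simp [hvdef]
    have horth : ⟪⟪x, z⟫_ℂ • x, v⟫_ℂ = 0 := by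
      rw [inner_smul_left, hxv, mul_zero]
    have := norm_add_sq_eq_norm_sq_add_norm_sq_of_inner_eq_zero _ _ horth
    rw [hdecomp, hz] at this
    have hns : ‖⟪x, z⟫_ℂ • x‖ = c := by rw [norm_smul, hx, mul_one]
    rw [hns] at this; nlinarith [this]
  have hu : ‖u‖ = Real.sqrt (1 - b ^ 2) := by
    rw [← hyu]; exact (Real.sqrt_sq (norm_nonneg _)).symm
  have hv : ‖v‖ = Real.sqrt (1 - c ^ 2) := by
    rw [← hzv]; exact (Real.sqrt_sq (norm_nonneg _)).symm
  -- inner product expansion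
  have hexp : ⟪y, z⟫_ℂ = (starRingEnd ℂ) ⟪x, y⟫_ℂ * ⟪x, z⟫_ℂ + ⟪u, v⟫_ℂ := by
    have h1 : ⟪u, v⟫_ℂ = ⟪y, z⟫_ℂ - (starRingEnd ℂ) ⟪x, y⟫_ℂ * ⟪x, z⟫_ℂ := by
      have hux : ⟪u, x⟫_ℂ = 0 := by
        rw [← inner_conj_symm, hxu, map_zero]
      simp [hudef, hvdef, inner_sub_left, inner_sub_right, inner_smul_left,
        inner_smul_right, hxx, hxv, hux, hx, mul_comm]
    rw [h1]; ring
  -- lower bound on |⟨y,z⟩|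
  have hlow : b * c - Real.sqrt (1 - b ^ 2) * Real.sqrt (1 - c ^ 2)
      ≤ ‖⟪y, z⟫_ℂ‖ := by
    have huv : ‖⟪u, v⟫_ℂ‖ ≤ Real.sqrt (1 - b ^ 2) * Real.sqrt (1 - c ^ 2) := by
      have := norm_inner_le_norm (𝕜 := ℂ) u v
      rwa [hu, hv] at this
    have h1 : ‖(starRingEnd ℂ) ⟪x, y⟫_ℂ * ⟪x, z⟫_ℂ‖ = b * c := by
      rw [norm_mul, Complex.norm_conj]
    calc b * c - Real.sqrt (1 - b ^ 2) * Real.sqrt (1 - c ^ 2)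
        ≤ ‖(starRingEnd ℂ) ⟪x, y⟫_ℂ * ⟪x, z⟫_ℂ‖ - ‖⟪u, v⟫_ℂ‖ := by
          rw [h1]; linarith
      _ ≤ ‖⟪y, z⟫_ℂ‖ := by
          rw [hexp]
          have := norm_add_le ((starRingEnd ℂ) ⟪x, y⟫_ℂ * ⟪x, z⟫_ℂ + ⟪u, v⟫_ℂ)
            (-⟪u, v⟫_ℂ)
          simp only [add_neg_cancel_right, norm_neg] at this
          linarith
  -- cos of sum
  have hcos : Real.cos (Real.arccos b + Real.arccos c)
      = b * c - Real.sqrt (1 - b ^ 2) * Real.sqrt (1 - c ^ 2) := by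
    rw [Real.cos_add, Real.cos_arccos (by linarith) hb1, Real.cos_arccos (by linarith) hc1,
      Real.sin_arccos, Real.sin_arccos]
  have hsum0 : 0 ≤ Real.arccos b + Real.arccos c :=
    add_nonneg (Real.arccos_nonneg _) (Real.arccos_nonneg _)
  have hsumpi : Real.arccos b + Real.arccos c ≤ π := by
    have h1 : Real.arccos b ≤ π / 2 := Real.arccos_le_pi_div_two.2 hb0
    have h2 : Real.arccos c ≤ π / 2 := Real.arccos_le_pi_div_two.2 hc0
    linarith
  calc Real.arccos (‖⟪y, z⟫_ℂ‖)
      ≤ Real.arccos (Real.cos (Real.arccos b + Real.arccos c)) := by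
        apply arccos_antitone; rw [hcos]; exact hlow
    _ = Real.arccos b + Real.arccos c := Real.arccos_cos hsum0 hsumpi

/-- Previous bound: for unit vectors `Φ₀, Ψ, Φ`,
`| |⟨Φ, Ψ⟩|² - |⟨Φ₀, Φ⟩|² | ≤ arccos |⟨Φ₀, Ψ⟩|`. -/
theorem fidelity_diff_le_arccos
    {E : Type*} [NormedAddCommGroup E] [InnerProductSpace ℂ E]
    (Φ₀ Ψ Φ : E) (hΦ₀ : ‖Φ₀‖ = 1) (hΨ : ‖Ψ‖ = 1) (hΦ : ‖Φ‖ = 1) :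
    |‖⟪Φ, Ψ⟫_ℂ‖ ^ 2 - ‖⟪Φ₀, Φ⟫_ℂ‖ ^ 2|
      ≤ Real.arccos ‖⟪Φ₀, Ψ⟫_ℂ‖ := by
  set a := ‖⟪Φ, Ψ⟫_ℂ‖ with hadef
  set b := ‖⟪Φ₀, Φ⟫_ℂ‖ with hbdef
  set c := ‖⟪Φ₀, Ψ⟫_ℂ‖ with hcdef
  have ha0 : 0 ≤ a := norm_nonneg _
  have hb0 : 0 ≤ b := norm_nonneg _
  have ha1 : a ≤ 1 := by
    have := norm_inner_le_norm (𝕜 := ℂ) Φ Ψ; rwa [hΦ, hΨ, one_mul] at this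
  have hb1 : b ≤ 1 := by
    have := norm_inner_le_norm (𝕜 := ℂ) Φ₀ Φ; rwa [hΦ₀, hΦ, one_mul] at this
  set A := Real.arccos a with hAdef
  set B := Real.arccos b with hBdef
  set C := Real.arccos c with hCdef
  -- triangle inequalities
  have tri1 : A ≤ B + C := by
    have h := bures_triangle Φ₀ Φ Ψ hΦ₀ hΦ hΨ
    exact h
  have tri2 : B ≤ A + C := by
    have h := bures_triangle Ψ Φ₀ Φ hΨ hΦ₀ hΦ
    have e1 : ‖⟪Ψ, Φ₀⟫_ℂ‖ = c := by
      rw [hcdef, ← inner_conj_symm, Complex.norm_conj]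
    have e2 : ‖⟪Ψ, Φ⟫_ℂ‖ = a := by
      rw [hadef, ← inner_conj_symm, Complex.norm_conj]
    rw [e1, e2] at h
    linarith
  have habs : |A - B| ≤ C := abs_sub_le_iff.2 ⟨by linarith, by linarith⟩
  have hcA : Real.cos A = a := Real.cos_arccos (by linarith) ha1
  have hcB : Real.cos B = b := Real.cos_arccos (by linarith) hb1
  have hid : Real.cos A ^ 2 - Real.cos B ^ 2 = Real.sin (A + B) * Real.sin (B - A) := by
    rw [Real.sin_add, Real.sin_sub]
    nlinarith [Real.sin_sq_add_cos_sq A, Real.sin_sq_add_cos_sq B]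
  calc |a ^ 2 - b ^ 2| = |Real.sin (A + B) * Real.sin (B - A)| := by
        rw [← hcA, ← hcB, hid]
    _ ≤ 1 * |Real.sin (B - A)| := by
        rw [abs_mul]
        exact mul_le_mul_of_nonneg_right (Real.abs_sin_le_one _) (abs_nonneg _)
    _ = |Real.sin (B - A)| := one_mul _
    _ ≤ |B - A| := Real.abs_sin_le_abs
    _ = |A - B| := abs_sub_comm _ _
    _ ≤ C := habs
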